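/- Let I be an arbitrary index set and let X = ℝ^I carry the product topology. Every strongly continuous semigroup (T_t)_{t≥0} of continuous linear operators on X has an everywhere defined continuous linear generator A (i.e., A x = lim_{h→0⁺} h⁻¹ • (T_h x − x) exists for all x and A is continuous and linear), and for every x ∈ X and t ≥ 0 one has T_t x = ∑_{k=0}^∞ (t^k / k!) • A^k x, the series converging in the product topology. -/

import Mathlib

open Filter Topology Set

lemma aux5_clm_null {I : Type*} (φ : (I → ℝ) →L[ℝ] ℝ) :
    ∃ S : Finset I, ∀ x : I → ℝ, (∀ k ∈ S, x k = 0) → φ x = 0 := by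
  have hc : {y : I → ℝ | |φ y| < 1} ∈ 𝓝 (0 : I → ℝ) := by
    have : Continuous fun y : I → ℝ => |φ y| := φ.continuous.abs
    have := this.continuousAt (x := (0 : I → ℝ))
    have h0 : |φ 0| < 1 := by simp
    exact this.preimage_mem_nhds (isOpen_Iio.mem_nhds (by simpa using h0))
  rw [nhds_pi, Filter.mem_pi] at hc
  obtain ⟨S, hSfin, t, ht, hsub⟩ := hc
  refine ⟨hSfin.toFinset, fun x hx => ?_⟩
  by_contra h
  have key : ∀ c : ℝ, |φ (c • x)| < 1 := by
    intro c
    apply hsub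
    intro i hi
    have : x i = 0 := hx i (hSfin.mem_toFinset.2 hi)
    simp [this]
    exact mem_of_mem_nhds (ht i)
  have := key (2 / |φ x|)
  rw [map_smul] at this
  have hφ : |φ x| > 0 := abs_pos.2 h
  rw [smul_eq_mul, abs_mul, abs_div] at this
  simp only [abs_abs] at this
  rw [div_mul_cancel₀] at this <;> norm_num [hφ.ne'] at this

lemma aux5_clm_rep {I : Type*} [DecidableEq I] (φ : (I → ℝ) →L[ℝ] ℝ) (S : Finset I)
    (hS : ∀ k ∉ S, φ (Pi.single k 1) = 0) (x : I → ℝ) :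
    φ x = ∑ k ∈ S, x k * φ (Pi.single k 1) := by
  obtain ⟨S0, hS0⟩ := aux5_clm_null φ
  have hS0null : ∀ k ∉ S0, φ (Pi.single k 1) = 0 := by
    intro k hk
    refine hS0 _ fun k' hk' => ?_
    rw [Pi.single_apply]
    have : ¬ k' = k := fun h => hk (h ▸ hk')
    simp [this]
  have hrep0 : φ x = ∑ k ∈ S0, x k * φ (Pi.single k 1) := by
    have hy : φ (x - ∑ k ∈ S0, x k • (Pi.single k 1 : I → ℝ)) = 0 := by
      refine hS0 _ fun k' hk' => ?_
      simp only [Pi.sub_apply, Finset.sum_apply, Pi.smul_apply, Pi.single_apply]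
      rw [Finset.sum_eq_single k']
      · simp
      · intro b _ hb; simp [Ne.symm hb]
      · intro h; exact absurd hk' h
    rw [map_sub, map_sum, sub_eq_zero] at hy
    simpa [map_smul, smul_eq_mul] using hy
  calc φ x = ∑ k ∈ S0 ∪ S, x k * φ (Pi.single k 1) := by
        rw [hrep0]
        exact Finset.sum_subset Finset.subset_union_left
          (fun k _ hk => by rw [hS0null k hk, mul_zero])
    _ = ∑ k ∈ S, x k * φ (Pi.single k 1) := by
        refine (Finset.sum_subset Finset.subset_union_right
          (fun k _ hk => by rw [hS k hk, mul_zero])).symm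

lemma aux5_supp_finite {I : Type*} [DecidableEq I] (T : ℝ → (I → ℝ) →L[ℝ] (I → ℝ))
    (horbit : ∀ x : I → ℝ, ContinuousOn (fun t : ℝ => T t x) (Set.Ici 0))
    (j : I) (n : ℝ) :
    {k : I | ∃ t ∈ Set.Icc (0:ℝ) n, T t (Pi.single k 1) j ≠ 0}.Finite := by
  classical
  by_contra hfin
  have hinf : {k : I | ∃ t ∈ Set.Icc (0:ℝ) n, T t (Pi.single k 1) j ≠ 0}.Infinite := hfin
  set G := {k : I | ∃ t ∈ Set.Icc (0:ℝ) n, T t (Pi.single k 1) j ≠ 0} with hG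
  let e : ℕ ↪ ↑G := hinf.natEmbedding
  have hmem : ∀ p : ℕ, ∃ t ∈ Set.Icc (0:ℝ) n, T t (Pi.single ((e p : ↑G) : I) 1) j ≠ 0 :=
    fun p => (e p).2
  choose τ hτmem hτne using hmem
  obtain ⟨tstar, htstar, σ, hσmono, hσtend⟩ := isCompact_Icc.tendsto_subseq hτmem
  -- re-indexed data
  set kk : ℕ → I := fun p => ((e (σ p) : ↑G) : I) with hkk
  set tt : ℕ → ℝ := fun p => τ (σ p) with htt
  have hkkinj : Function.Injective kk := by
    intro a b hab
    exact hσmono.injective (e.injective (Subtype.ext hab))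
  have httmem : ∀ p, tt p ∈ Set.Icc (0:ℝ) n := fun p => hτmem (σ p)
  have httne : ∀ p, T (tt p) (Pi.single (kk p) 1) j ≠ 0 := fun p => hτne (σ p)
  have htttend : Tendsto tt atTop (𝓝 tstar) := hσtend
  -- rows
  set φ : ℕ → (I → ℝ) →L[ℝ] ℝ :=
    fun p => (ContinuousLinearMap.proj j).comp (T (tt p)) with hφ
  have hφapp : ∀ p (y : I → ℝ), φ p y = T (tt p) y j := fun p y => rfl
  set Sf : ℕ → Finset I := fun p => (aux5_clm_null (φ p)).choose with hSf
  have hSfspec : ∀ p (x : I → ℝ), (∀ k ∈ Sf p, x k = 0) → φ p x = 0 :=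
    fun p => (aux5_clm_null (φ p)).choose_spec
  have hnull : ∀ p k, k ∉ Sf p → φ p (Pi.single k 1) = 0 := by
    intro p k hk
    refine hSfspec p _ fun k' hk' => ?_
    rw [Pi.single_apply]
    have : ¬ k' = k := fun h => hk (h ▸ hk')
    simp [this]
  -- recursive selection of indices
  have exists_next : ∀ (p : ℕ) (avoid : Finset I), ∃ p', p < p' ∧ kk p' ∉ avoid := by
    intro p avoid
    have hfin2 : (kk ⁻¹' (avoid : Set I)).Finite :=
      Set.Finite.preimage hkkinj.injOn avoid.finite_toSet
    obtain ⟨N, hN⟩ := hfin2.bddAbove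
    refine ⟨max p N + 1, by omega, fun hmem2 => ?_⟩
    have := hN (Set.mem_preimage.mpr (by exact_mod_cast hmem2))
    omega
  let g : ℕ → ℕ × Finset I := fun m => Nat.rec
    (let p := (exists_next 0 ∅).choose; (p, Sf p ∪ {kk p}))
    (fun _ st => let p := (exists_next st.1 st.2).choose; (p, st.2 ∪ Sf p ∪ {kk p})) m
  set q : ℕ → ℕ := fun m => (g m).1 with hq
  set Av : ℕ → Finset I := fun m => (g m).2 with hAv
  have hgsucc : ∀ m, q (m+1) = (exists_next (q m) (Av m)).choose ∧
      Av (m+1) = Av m ∪ Sf (q (m+1)) ∪ {kk (q (m+1))} := fun m => ⟨rfl, rfl⟩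
  have hqmono : StrictMono q := by
    apply strictMono_nat_of_lt_succ
    intro m
    rw [(hgsucc m).1]
    exact (exists_next (q m) (Av m)).choose_spec.1
  have hAvsub : ∀ m, Av m ⊆ Av (m+1) := by
    intro m
    rw [(hgsucc m).2]
    intro a ha
    exact Finset.mem_union_left _ (Finset.mem_union_left _ ha)
  have hAvmono : ∀ m m', m ≤ m' → Av m ⊆ Av m' := by
    intro m m' h
    induction m' with
    | zero =>
      have : m = 0 := by omega
      subst this; exact fun a ha => ha
    | succ M ih =>
      rcases Nat.lt_or_ge m (M+1) with h'|h'
      · exact fun a ha => hAvsub M (ih (by omega) ha)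
      · have : m = M + 1 := by omega
        subst this; exact fun a ha => ha
  have hSfAv : ∀ m, Sf (q m) ⊆ Av m := by
    intro m
    cases m with
    | zero => intro a ha; exact Finset.mem_union_left _ ha
    | succ M =>
      rw [(hgsucc M).2]
      intro a ha
      exact Finset.mem_union_left _ (Finset.mem_union_right _ ha)
  have hkkAv : ∀ m, kk (q m) ∈ Av m := by
    intro m
    cases m with
    | zero => exact Finset.mem_union_right _ (Finset.mem_singleton_self _)
    | succ M =>
      rw [(hgsucc M).2]
      exact Finset.mem_union_right _ (Finset.mem_singleton_self _)
  have hfresh : ∀ m m', m < m' → kk (q m') ∉ Av m := by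
    intro m m' h hmem3
    have h1 : kk (q m') ∉ Av (m'-1) := by
      have hm' : m' = (m'-1) + 1 := by omega
      rw [hm', (hgsucc (m'-1)).1]
      exact (exists_next (q (m'-1)) (Av (m'-1))).choose_spec.2
    exact h1 (hAvmono m (m'-1) (by omega) hmem3)
  -- coefficients by recursion
  set d : ℕ → ℝ := fun m => φ (q m) (Pi.single (kk (q m)) 1) with hd
  have hdne : ∀ m, d m ≠ 0 := fun m => httne (q m)
  set coef : ℕ → ℕ → ℝ := fun m m' => φ (q m) (Pi.single (kk (q m')) 1) with hcoef
  let gc : ℕ → (ℕ → ℝ) := fun m => Nat.rec (fun _ => (0:ℝ))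
    (fun M f => Function.update f M
      ((((M:ℝ)+1) - ∑ m' ∈ Finset.range M, f m' * coef M m') / d M)) m
  set c : ℕ → ℝ := fun m => gc (m+1) m with hc
  have hgcsucc : ∀ M, gc (M+1) = Function.update (gc M) M
      ((((M:ℝ)+1) - ∑ m' ∈ Finset.range M, gc M m' * coef M m') / d M) := fun M => rfl
  have hstab : ∀ M m, m < M → gc M m = c m := by
    intro M
    induction M with
    | zero => omega
    | succ M ih =>
      intro m hm
      rcases Nat.lt_or_ge m M with h'|h'
      · rw [hgcsucc M, Function.update_of_ne (by omega), ih m h']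
      · have : m = M := by omega
        subst this; rfl
  have hcspec : ∀ m, c m * d m = ((m:ℝ)+1) - ∑ m' ∈ Finset.range m, c m' * coef m m' := by
    intro m
    have : c m = (((m:ℝ)+1) - ∑ m' ∈ Finset.range m, gc m m' * coef m m') / d m := by
      show gc (m+1) m = _
      rw [hgcsucc m, Function.update_self]
    rw [this, div_mul_cancel₀ _ (hdne m)]
    congr 1
    apply Finset.sum_congr rfl
    intro m' hm'
    rw [hstab m m' (Finset.mem_range.mp hm')]
  -- the adversarial vector
  set x : I → ℝ := fun k => if h : ∃ m, kk (q m) = k then c h.choose else 0 with hx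
  have hx1 : ∀ m, x (kk (q m)) = c m := by
    intro m
    have hex : ∃ m', kk (q m') = kk (q m) := ⟨m, rfl⟩
    rw [hx]
    simp only [dif_pos hex]
    congr 1
    exact hqmono.injective (hkkinj hex.choose_spec)
  have hx0 : ∀ k, (¬ ∃ m, kk (q m) = k) → x k = 0 := by
    intro k hk; rw [hx]; simp only [dif_neg hk]
  -- evaluation
  have heval : ∀ m, φ (q m) x = (m:ℝ) + 1 := by
    intro m
    set S' : Finset I := Sf (q m) ∪ (Finset.range (m+1)).image (fun m' => kk (q m')) with hS'
    have hS'null : ∀ k ∉ S', φ (q m) (Pi.single k 1) = 0 := by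
      intro k hk
      exact hnull (q m) k (fun h => hk (Finset.mem_union_left _ h))
    rw [aux5_clm_rep (φ (q m)) S' hS'null x]
    have himsub : (Finset.range (m+1)).image (fun m' => kk (q m')) ⊆ S' :=
      Finset.subset_union_right
    rw [← Finset.sum_subset himsub ?van]
    case van =>
      intro k hkS' hkim
      by_cases hxk : x k = 0
      · rw [hxk, zero_mul]
      · exfalso
        have hex : ∃ m', kk (q m') = k := by
          by_contra hnex
          exact hxk (hx0 k hnex)
        obtain ⟨m0, hm0⟩ := hex
        have hm0big : m0 > m := by
          by_contra hle
          exact hkim (Finset.mem_image.mpr ⟨m0, Finset.mem_range.mpr (by omega), hm0⟩)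
        have : k ∈ Sf (q m) := by
          rcases Finset.mem_union.mp hkS' with h|h
          · exact h
          · exact absurd h hkim
        exact hfresh m m0 hm0big (hm0 ▸ hSfAv m this)
    rw [Finset.sum_image (by intro a _ b _ hab; exact hqmono.injective (hkkinj hab))]
    have : ∀ m' ∈ Finset.range (m+1), x (kk (q m')) * φ (q m) (Pi.single (kk (q m')) 1)
        = c m' * coef m m' := by
      intro m' _
      rw [hx1 m']
    rw [Finset.sum_congr rfl this, Finset.sum_range_succ]
    have : coef m m = d m := rfl
    rw [this, hcspec m]
    ring
  -- contradiction with continuity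
  have h1 : Tendsto (fun m => φ (q m) x) atTop (𝓝 (T tstar x j)) := by
    have hq2 : Tendsto (fun m => tt (q m)) atTop (𝓝 tstar) :=
      htttend.comp (hqmono.tendsto_atTop)
    have hcw : ContinuousWithinAt (fun t => T t x) (Set.Ici 0) tstar :=
      (horbit x) tstar (Set.mem_of_mem_of_subset htstar Set.Icc_subset_Ici_self)
    have hq3 : Tendsto (fun m => tt (q m)) atTop (𝓝[Set.Ici 0] tstar) := by
      rw [tendsto_nhdsWithin_iff]
      exact ⟨hq2, Eventually.of_forall (fun m => (httmem (q m)).1)⟩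
    have := (hcw.tendsto.comp hq3)
    exact ((continuous_apply j).continuousAt.tendsto.comp this)
  have h2 : Tendsto (fun m => φ (q m) x) atTop atTop := by
    have : (fun m : ℕ => φ (q m) x) = fun m : ℕ => (m:ℝ) + 1 := funext heval
    rw [this]
    exact tendsto_atTop_add_const_right _ 1 tendsto_natCast_atTop_atTop
  exact not_tendsto_nhds_of_tendsto_atTop h2 _ h1

set_option maxHeartbeats 2000000 in
lemma aux5_deriv_exists {I : Type*} [DecidableEq I] (T : ℝ → (I → ℝ) →L[ℝ] (I → ℝ))
    (hT0 : T 0 = ContinuousLinearMap.id ℝ (I → ℝ))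
    (hTadd : ∀ s t : ℝ, 0 ≤ s → 0 ≤ t → T (s + t) = (T s).comp (T t))
    (horbit : ∀ x : I → ℝ, ContinuousOn (fun t : ℝ => T t x) (Set.Ici 0))
    (l k : I) :
    ∃ a : ℝ, HasDerivWithinAt (fun t : ℝ => T t (Pi.single k 1) l) a (Set.Ici 0) 0 := by
  classical
  -- globally defined continuous matrix entries
  set mc : I → I → ℝ → ℝ := fun l' k' t => T (max t 0) (Pi.single k' 1) l' with hmc
  have hmccont : ∀ l' k', Continuous (mc l' k') := by
    intro l' k'
    have h1 : Continuous fun t : ℝ => max t 0 := continuous_id.max continuous_const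
    have h2 := (horbit (Pi.single k' 1)).comp_continuous h1 (fun t => le_max_right t 0)
    exact (continuous_apply l').comp h2
  have hmceq : ∀ l' k', ∀ t ≥ (0:ℝ), mc l' k' t = T t (Pi.single k' 1) l' := by
    intro l' k' t ht; simp [hmc, max_eq_left ht]
  have hmc0 : ∀ l' k', mc l' k' 0 = (if l' = k' then (1:ℝ) else 0) := by
    intro l' k'
    rw [hmceq l' k' 0 le_rfl, hT0]
    simp [Pi.single_apply]
  set G : Finset I := (aux5_supp_finite T horbit l 1).toFinset with hGdef
  have hGmem : ∀ k', k' ∈ G ↔ ∃ t ∈ Set.Icc (0:ℝ) 1, T t (Pi.single k' 1) l ≠ 0 := by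
    intro k'; rw [hGdef, Set.Finite.mem_toFinset]; rfl
  have hlG : l ∈ G := by
    rw [hGmem]
    exact ⟨0, ⟨le_rfl, zero_le_one⟩, by rw [hT0]; simp⟩
  by_cases hkG : k ∈ G
  swap
  · -- trivial case : the entry vanishes near 0
    refine ⟨0, ?_⟩
    have hzero : ∀ t ∈ Set.Icc (0:ℝ) 1, T t (Pi.single k 1) l = 0 := by
      intro t ht
      by_contra h
      exact hkG ((hGmem k).mpr ⟨t, ht, h⟩)
    have : HasDerivWithinAt (fun _ : ℝ => (0:ℝ)) 0 (Set.Ici 0) 0 := (hasDerivAt_const _ _).hasDerivWithinAt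
    refine this.congr_of_eventuallyEq ?_ ?_
    · have hIcc : Set.Icc (0:ℝ) 1 ∈ 𝓝[Set.Ici 0] (0:ℝ) := by
        rw [show Set.Icc (0:ℝ) 1 = Set.Ici 0 ∩ Set.Iic 1 by rw [Set.Ici_inter_Iic]]
        exact inter_mem_nhdsWithin _ (Iic_mem_nhds zero_lt_one)
      filter_upwards [hIcc] with t ht
      exact hzero t ht
    · exact hzero 0 ⟨le_rfl, zero_le_one⟩
  -- main case
  -- the linear "row-vector times matrix" operator
  set Elin : (↥G → ↥G → ℝ) →ₗ[ℝ] ((↥G → ℝ) →ₗ[ℝ] (↥G → ℝ)) :=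
    { toFun := fun M =>
        { toFun := fun y k' => ∑ k'' : ↥G, y k'' * M k'' k'
          map_add' := by
            intro y z; funext k'
            simp [add_mul, Finset.sum_add_distrib]
          map_smul' := by
            intro c y; funext k'
            simp [Finset.mul_sum, mul_assoc] }
      map_add' := by
        intro M M'; apply LinearMap.ext; intro y; funext k'
        simp [mul_add, Finset.sum_add_distrib]
      map_smul' := by
        intro c M; apply LinearMap.ext; intro y; funext k'
        simp [Finset.mul_sum, mul_left_comm] } with hElin
  set Efull : (↥G → ↥G → ℝ) →ₗ[ℝ] ((↥G → ℝ) →L[ℝ] (↥G → ℝ)) :=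
    (LinearMap.toContinuousLinearMap : ((↥G → ℝ) →ₗ[ℝ] (↥G → ℝ)) ≃ₗ[ℝ] ((↥G → ℝ) →L[ℝ] (↥G → ℝ))).toLinearMap.comp Elin with hEfull
  have hEapp : ∀ (M : ↥G → ↥G → ℝ) (y : ↥G → ℝ) (k' : ↥G),
      Efull M y k' = ∑ k'' : ↥G, y k'' * M k'' k' := by
    intro M y k'
    rw [hEfull]
    simp only [LinearMap.comp_apply, LinearEquiv.coe_toLinearMap]
    rw [LinearMap.coe_toContinuousLinearMap']
    rfl
  have hEcont : Continuous Efull := Efull.continuous_of_finiteDimensional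
  -- the averaged matrix and its limit
  set Dmat : ℝ → (↥G → ↥G → ℝ) := fun ε k'' k' => ε⁻¹ * ∫ t in (0:ℝ)..ε, mc ↑k'' ↑k' t with hDmat
  set Imat : (↥G → ↥G → ℝ) := fun k'' k' => mc ↑k'' ↑k' 0 with hImat
  have hDtend : Tendsto Dmat (𝓝[>] (0:ℝ)) (𝓝 Imat) := by
    rw [tendsto_pi_nhds]
    intro k''
    rw [tendsto_pi_nhds]
    intro k'
    have hF : HasDerivAt (fun s => ∫ t in (0:ℝ)..s, mc ↑k'' ↑k' t) (mc ↑k'' ↑k' 0) 0 :=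
      intervalIntegral.integral_hasDerivAt_right
        ((hmccont _ _).intervalIntegrable _ _)
        ((hmccont _ _).stronglyMeasurableAtFilter _ _)
        (hmccont _ _).continuousAt
    have hslope := hasDerivAt_iff_tendsto_slope.mp hF
    have hslope2 : Tendsto (slope (fun s => ∫ t in (0:ℝ)..s, mc ↑k'' ↑k' t) 0) (𝓝[>] 0)
        (𝓝 (mc ↑k'' ↑k' 0)) :=
      hslope.mono_left (nhdsWithin_mono _ (fun y hy => ne_of_gt hy))
    have heq : (fun ε : ℝ => ε⁻¹ * ∫ t in (0:ℝ)..ε, mc ↑k'' ↑k' t)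
        = slope (fun s => ∫ t in (0:ℝ)..s, mc ↑k'' ↑k' t) 0 := by
      funext ε
      rw [slope_def_field]
      simp [div_eq_inv_mul]
    show Tendsto (fun ε : ℝ => ε⁻¹ * ∫ t in (0:ℝ)..ε, mc ↑k'' ↑k' t) (𝓝[>] 0) (𝓝 (mc ↑k'' ↑k' 0))
    rw [heq]
    exact hslope2
  have hOtend : Tendsto (fun ε => Efull (Dmat ε)) (𝓝[>] (0:ℝ)) (𝓝 (Efull Imat)) :=
    (hEcont.continuousAt.tendsto).comp hDtend
  have hEI : Efull Imat = 1 := by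
    ext y k'
    rw [hEapp]
    have hterm : ∀ k'' : ↥G, y k'' * Imat k'' k' = if k'' = k' then y k'' else 0 := by
      intro k''
      show y k'' * mc ↑k'' ↑k' 0 = _
      rw [hmc0]
      by_cases h : k'' = k'
      · subst h; simp
      · have h2 : ¬ ((k'' : I) = ↑k') := fun hc => h (Subtype.ext hc)
        simp [h, h2]
    rw [Finset.sum_congr rfl (fun k'' _ => hterm k''), Finset.sum_ite_eq' Finset.univ k' y]
    simp
  -- choose ε
  have hev : ∀ᶠ ε in 𝓝[>] (0:ℝ), ‖Efull (Dmat ε) - 1‖ < 1 := by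
    rw [hEI] at hOtend
    have := hOtend (Metric.ball_mem_nhds (1 : (↥G → ℝ) →L[ℝ] (↥G → ℝ)) one_pos)
    filter_upwards [this] with ε hε
    rw [← dist_eq_norm]
    exact hε
  obtain ⟨ε, hεnorm, hεpos⟩ := (hev.and (eventually_mem_nhdsWithin)).exists
  rw [Set.mem_Ioi] at hεpos
  -- D is invertible
  set Dop : (↥G → ℝ) →L[ℝ] (↥G → ℝ) := Efull (Dmat ε) with hDop
  have hDunit : IsUnit Dop := by
    have h1 : ‖(1 : (↥G → ℝ) →L[ℝ] (↥G → ℝ)) - Dop‖ < 1 := by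
      rw [norm_sub_rev]; exact hεnorm
    exact ⟨Units.oneSub _ h1, sub_sub_cancel 1 Dop⟩
  obtain ⟨u, hu⟩ := hDunit
  -- the fundamental identity
  have key : ∀ s ∈ Set.Icc (0:ℝ) 1, ∀ t ≥ (0:ℝ), ∀ k' : ↥G,
      mc l ↑k' (s + t) = ∑ k'' : ↥G, mc l ↑k'' s * mc ↑k'' ↑k' t := by
    intro s hs t ht k'
    have hs0 : (0:ℝ) ≤ s := hs.1
    rw [hmceq l ↑k' (s+t) (by linarith)]
    rw [hTadd s t hs0 ht]
    have hφ : ∀ k'' ∉ G, ((ContinuousLinearMap.proj l).comp (T s)) (Pi.single k'' 1) = 0 := by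
      intro k'' hk''
      show T s (Pi.single k'' 1) l = 0
      by_contra h
      exact hk'' ((hGmem k'').mpr ⟨s, hs, h⟩)
    have := aux5_clm_rep ((ContinuousLinearMap.proj l).comp (T s)) G hφ (T t (Pi.single ↑k' 1))
    have h2 : T (s) (T t (Pi.single ↑k' 1)) l
        = ∑ k'' ∈ G, T t (Pi.single ↑k' 1) k'' * T s (Pi.single k'' 1) l := this
    rw [ContinuousLinearMap.comp_apply]
    rw [h2, ← Finset.sum_coe_sort G (fun k'' => T t (Pi.single ↑k' 1) k'' * T s (Pi.single k'' 1) l)]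
    refine Finset.sum_congr rfl fun k'' _ => ?_
    rw [hmceq l ↑k'' s hs0, hmceq ↑k'' ↑k' t ht]
    ring
  -- the smoothing identity
  set W : ↥G → ℝ → ℝ := fun k' s => ∫ t in (0:ℝ)..s, mc l ↑k' t with hW
  set fvec : ℝ → (↥G → ℝ) := fun s k' => mc l ↑k' s with hfvec
  have hsmooth : ∀ s ∈ Set.Icc (0:ℝ) 1, Dop (fvec s)
      = fun k' => ε⁻¹ * (W k' (s + ε) - W k' s) := by
    intro s hs
    funext k'
    rw [hDop, hEapp]
    have h1 : ∀ k'' : ↥G, fvec s k'' * Dmat ε k'' k'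
        = ε⁻¹ * ∫ t in (0:ℝ)..ε, mc l ↑k'' s * mc ↑k'' ↑k' t := by
      intro k''
      rw [hDmat]
      simp only []
      rw [intervalIntegral.integral_const_mul]
      ring
    rw [Finset.sum_congr rfl (fun k'' _ => h1 k''), ← Finset.mul_sum]
    congr 1
    have hsum := intervalIntegral.integral_finset_sum (μ := MeasureTheory.volume) (a := 0) (b := ε)
      (s := (Finset.univ : Finset ↥G))
      (f := fun (i : ↥G) (t : ℝ) => mc l ↑i s * mc ↑i ↑k' t)
      (fun i _ => (continuous_const.mul (hmccont ↑i ↑k')).intervalIntegrable _ _)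
    rw [← hsum]
    have h2 : Set.EqOn (fun t => ∑ k'' : ↥G, mc l ↑k'' s * mc ↑k'' ↑k' t)
        (fun t => mc l ↑k' (s + t)) (Set.uIcc (0:ℝ) ε) := by
      intro t ht
      rw [Set.uIcc_of_le (le_of_lt hεpos)] at ht
      exact (key s hs t ht.1 k').symm
    rw [intervalIntegral.integral_congr h2]
    have h3 := intervalIntegral.integral_comp_add_left (fun u => mc l ↑k' u) s (a := 0) (b := ε)
    rw [h3, add_zero, hW]
    rw [← intervalIntegral.integral_interval_sub_left
      ((hmccont l ↑k').intervalIntegrable _ _) ((hmccont l ↑k').intervalIntegrable _ _)]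
  -- invert
  have hfveceq : ∀ s ∈ Set.Icc (0:ℝ) 1,
      fvec s = (↑u⁻¹ : (↥G → ℝ) →L[ℝ] (↥G → ℝ)) (fun k' => ε⁻¹ * (W k' (s + ε) - W k' s)) := by
    intro s hs
    rw [← hsmooth s hs, ← hu, ← ContinuousLinearMap.mul_apply, u.inv_mul,
      ContinuousLinearMap.one_apply]
  -- derivative of the explicit expression at 0
  have hWder : ∀ (k' : ↥G) (s : ℝ), HasDerivAt (W k') (mc l ↑k' s) s := by
    intro k' s
    exact intervalIntegral.integral_hasDerivAt_right
      ((hmccont _ _).intervalIntegrable _ _)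
      ((hmccont _ _).stronglyMeasurableAtFilter _ _)
      (hmccont _ _).continuousAt
  have hinner : HasDerivAt (fun s => (fun k' : ↥G => ε⁻¹ * (W k' (s + ε) - W k' s)))
      (fun k' : ↥G => ε⁻¹ * (mc l ↑k' ε - mc l ↑k' 0)) 0 := by
    rw [hasDerivAt_pi]
    intro k'
    have h1 : HasDerivAt (fun s : ℝ => W k' (s + ε)) (mc l ↑k' ε) 0 := by
      have h0 := (hWder k' (0 + ε)).comp (0:ℝ) ((hasDerivAt_id (0:ℝ)).add_const ε)
      simpa [Function.comp_def] using h0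
    have := (h1.sub (hWder k' 0)).const_mul ε⁻¹
    simpa using this
  have hPhi : HasDerivAt
      (fun s => (↑u⁻¹ : (↥G → ℝ) →L[ℝ] (↥G → ℝ)) (fun k' : ↥G => ε⁻¹ * (W k' (s + ε) - W k' s)))
      ((↑u⁻¹ : (↥G → ℝ) →L[ℝ] (↥G → ℝ)) (fun k' : ↥G => ε⁻¹ * (mc l ↑k' ε - mc l ↑k' 0))) 0 := by
    have := ((↑u⁻¹ : (↥G → ℝ) →L[ℝ] (↥G → ℝ))).hasFDerivAt.comp_hasDerivAt 0 hinner
    simpa [Function.comp_def] using this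
  set kG : ↥G := ⟨k, hkG⟩ with hkGdef
  have hcoord := hasDerivAt_pi.mp hPhi kG
  refine ⟨(↑u⁻¹ : (↥G → ℝ) →L[ℝ] (↥G → ℝ)) (fun k' : ↥G => ε⁻¹ * (mc l ↑k' ε - mc l ↑k' 0)) kG, ?_⟩
  have hIcc : Set.Icc (0:ℝ) 1 ∈ 𝓝[Set.Ici 0] (0:ℝ) := by
    rw [show Set.Icc (0:ℝ) 1 = Set.Ici 0 ∩ Set.Iic 1 by rw [Set.Ici_inter_Iic]]
    exact inter_mem_nhdsWithin _ (Iic_mem_nhds zero_lt_one)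
  have heqn : ∀ s ∈ Set.Icc (0:ℝ) 1, T s (Pi.single k 1) l
      = (↑u⁻¹ : (↥G → ℝ) →L[ℝ] (↥G → ℝ)) (fun k' : ↥G => ε⁻¹ * (W k' (s + ε) - W k' s)) kG := by
    intro s hs
    rw [← hfveceq s hs]
    rw [hfvec]
    exact (hmceq l k s hs.1).symm
  refine (hcoord.hasDerivWithinAt).congr_of_eventuallyEq ?_ ?_
  · filter_upwards [hIcc] with s hs
    exact heqn s hs
  · exact heqn 0 ⟨le_rfl, zero_le_one⟩

lemma aux5_ode_unique {V : Type*} [NormedAddCommGroup V] [NormedSpace ℝ V] [CompleteSpace V]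
    (B : V →L[ℝ] V) (u : ℝ → V) (n : ℝ)
    (hcont : ContinuousOn u (Set.Icc 0 n))
    (hder : ∀ s ∈ Set.Ico 0 n, HasDerivWithinAt u (B (u s)) (Set.Ici s) s) :
    ∀ t ∈ Set.Icc 0 n, u t = NormedSpace.exp (t • B) (u 0) := by
  set g : ℝ → V := fun s => (NormedSpace.exp (s • (-B))) (u s) with hg
  have hexpder : ∀ s : ℝ, HasDerivAt (fun s : ℝ => NormedSpace.exp (s • (-B)))
      (NormedSpace.exp (s • (-B)) * (-B)) s := fun s => hasDerivAt_exp_smul_const (-B) s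
  have hexpcont : Continuous (fun s : ℝ => NormedSpace.exp (s • (-B))) := by
    have : ∀ s : ℝ, ContinuousAt (fun s : ℝ => NormedSpace.exp (s • (-B))) s :=
      fun s => (hexpder s).continuousAt
    exact continuous_iff_continuousAt.mpr this
  have hgder : ∀ s ∈ Set.Ico 0 n, HasDerivWithinAt g 0 (Set.Ici s) s := by
    intro s hs
    have h1 : HasDerivWithinAt (fun s : ℝ => NormedSpace.exp (s • (-B)))
        (NormedSpace.exp (s • (-B)) * (-B)) (Set.Ici s) s := (hexpder s).hasDerivWithinAt
    have h2 := h1.clm_apply (hder s hs)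
    have h3 : (NormedSpace.exp (s • (-B)) * (-B)) (u s)
        + (NormedSpace.exp (s • (-B))) (B (u s)) = 0 := by
      rw [ContinuousLinearMap.mul_apply]
      simp
    rw [h3] at h2
    exact h2
  have hgcont : ContinuousOn g (Set.Icc 0 n) := by
    apply ContinuousOn.clm_apply
    · exact hexpcont.continuousOn
    · exact hcont
  have hconst := constant_of_has_deriv_right_zero hgcont hgder
  intro t ht
  have h4 : (NormedSpace.exp (t • (-B))) (u t) = (NormedSpace.exp ((0:ℝ) • (-B))) (u 0) := by
    have := hconst t ht
    simpa [hg] using this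
  have h5 : NormedSpace.exp (t • B) * NormedSpace.exp (t • (-B)) = 1 := by
    rw [← NormedSpace.exp_add_of_commute_of_mem_ball (𝕂 := ℝ) (hx := (NormedSpace.expSeries_radius_eq_top ℝ (V →L[ℝ] V)).symm ▸ edist_lt_top _ _) (hy := (NormedSpace.expSeries_radius_eq_top ℝ (V →L[ℝ] V)).symm ▸ edist_lt_top _ _)]
    · simp
    · simpa [smul_neg] using (Commute.refl (t • B)).neg_right
  have := congrArg (fun y => (NormedSpace.exp (t • B)) y) h4
  simp only [← ContinuousLinearMap.mul_apply] at this
  rw [h5] at this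
  simpa using this

lemma aux5_iterated_vanish {V : Type*} [NormedAddCommGroup V] [NormedSpace ℝ V] [CompleteSpace V]
    (B : V →L[ℝ] V) (u : ℝ → V) (w : V →L[ℝ] ℝ) (n : ℝ)
    (hder : ∀ s ∈ Set.Ico 0 n, HasDerivWithinAt u (B (u s)) (Set.Ici s) s)
    (h0 : ∀ s ∈ Set.Ico 0 n, w (u s) = 0) :
    ∀ (N : ℕ), ∀ s ∈ Set.Ico 0 n, w ((B ^ N) (u s)) = 0 := by
  intro N
  induction N with
  | zero =>
    intro s hs
    simpa using h0 s hs
  | succ N ih =>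
    intro s hs
    -- the function s ↦ w (B^N (u s)) is zero on Ico 0 n, its derivative is w (B^N (B (u s)))
    have hderN : HasDerivWithinAt (fun s => w ((B ^ N) (u s))) (w ((B ^ N) (B (u s))))
        (Set.Ici s) s := by
      have h1 := (hder s hs).const_smul (1:ℝ) -- dummy; we really compose with CLM
      have h2 : HasDerivWithinAt (fun s => (w.comp (B ^ N)) (u s))
          ((w.comp (B ^ N)) (B (u s))) (Set.Ici s) s :=
        ((w.comp (B ^ N)).hasFDerivAt.comp_hasDerivWithinAt s (hder s hs))
      simpa using h2
    have hzero : HasDerivWithinAt (fun s => w ((B ^ N) (u s))) 0 (Set.Ici s) s := by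
      have hmem : Set.Ico 0 n ∈ 𝓝[Set.Ici s] s := by
        have : Set.Ici s ∩ Set.Iio n ⊆ Set.Ico 0 n := by
          intro y hy
          exact ⟨le_trans hs.1 hy.1, hy.2⟩
        exact mem_nhdsWithin.mpr ⟨Set.Iio n, isOpen_Iio, hs.2, by
          intro y hy
          exact this ⟨hy.2, hy.1⟩⟩
      have heq : (fun s => w ((B ^ N) (u s))) =ᶠ[𝓝[Set.Ici s] s] (fun _ => (0:ℝ)) := by
        filter_upwards [hmem] with y hy
        exact ih y hy
      exact (hasDerivWithinAt_const s _ (0:ℝ)).congr_of_eventuallyEq heq (ih s hs)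
    -- uniqueness of derivative within Ici s
    have huniq : w ((B ^ N) (B (u s))) = 0 := by
      have hud : UniqueDiffWithinAt ℝ (Set.Ici s) s := uniqueDiffOn_Ici s s (Set.self_mem_Ici)
      exact hud.eq_deriv _ hderN hzero
    have : (B ^ (N+1)) (u s) = (B ^ N) (B (u s)) := by
      rw [pow_succ, ContinuousLinearMap.mul_apply]
    rw [this]
    exact huniq

set_option maxHeartbeats 1000000 in
set_option synthInstance.maxHeartbeats 400000 in
/-- Every strongly continuous semigroup on an arbitrary product
`ℝ^I` has an everywhere defined continuous linear generator `A` and is given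
by the exponential series `T_t x = ∑_{k=0}^∞ (t^k/k!) • A^k x`. -/
theorem stmt5 {I : Type*}
    (T : ℝ → (I → ℝ) →L[ℝ] (I → ℝ))
    (hT0 : T 0 = ContinuousLinearMap.id ℝ (I → ℝ))
    (hTadd : ∀ s t : ℝ, 0 ≤ s → 0 ≤ t → T (s + t) = (T s).comp (T t))
    (horbit : ∀ x : I → ℝ, ContinuousOn (fun t : ℝ => T t x) (Set.Ici 0)) :
    ∃ A : (I → ℝ) →L[ℝ] (I → ℝ),
      (∀ x : I → ℝ,
        Tendsto (fun h : ℝ => h⁻¹ • (T h x - x)) (𝓝[>] 0) (𝓝 (A x))) ∧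
      ∀ x : I → ℝ, ∀ t : ℝ, 0 ≤ t →
        Tendsto (fun N : ℕ => ∑ k ∈ Finset.range N,
            (t ^ k / (Nat.factorial k : ℝ)) • (A ^ k) x) atTop (𝓝 (T t x)) := by
  classical
  choose a ha using aux5_deriv_exists T hT0 hTadd horbit
  set Gf : I → ℝ → Finset I := fun j n => (aux5_supp_finite T horbit j n).toFinset with hGf
  have hGmem : ∀ j n k, k ∈ Gf j n ↔ ∃ t ∈ Set.Icc (0:ℝ) n, T t (Pi.single k 1) j ≠ 0 := by
    intro j n k
    rw [hGf, Set.Finite.mem_toFinset]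
    rfl
  have hGzero : ∀ j n k, k ∉ Gf j n → ∀ t ∈ Set.Icc (0:ℝ) n, T t (Pi.single k 1) j = 0 := by
    intro j n k hk t ht
    by_contra h
    exact hk ((hGmem j n k).mpr ⟨t, ht, h⟩)
  have hjG : ∀ (j : I) (n : ℝ), 0 ≤ n → j ∈ Gf j n := by
    intro j n hn
    rw [hGmem]
    exact ⟨0, ⟨le_rfl, hn⟩, by rw [hT0]; simp⟩
  have ha0 : ∀ l k, k ∉ Gf l 1 → a l k = 0 := by
    intro l k hk
    have hIcc : Set.Icc (0:ℝ) 1 ∈ 𝓝[Set.Ici 0] (0:ℝ) := by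
      rw [show Set.Icc (0:ℝ) 1 = Set.Ici 0 ∩ Set.Iic 1 by rw [Set.Ici_inter_Iic]]
      exact inter_mem_nhdsWithin _ (Iic_mem_nhds zero_lt_one)
    have hz : HasDerivWithinAt (fun t : ℝ => T t (Pi.single k 1) l) 0 (Set.Ici 0) 0 := by
      refine (hasDerivWithinAt_const (0:ℝ) _ (0:ℝ)).congr_of_eventuallyEq ?_ ?_
      · filter_upwards [hIcc] with s hs
        exact hGzero l 1 k hk s hs
      · exact hGzero l 1 k hk 0 ⟨le_rfl, zero_le_one⟩
    exact (uniqueDiffOn_Ici (0:ℝ) 0 Set.self_mem_Ici).eq_deriv _ (ha l k) hz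
  have hrep : ∀ (j : I) (n : ℝ), ∀ t ∈ Set.Icc (0:ℝ) n, ∀ x : I → ℝ,
      T t x j = ∑ k ∈ Gf j n, x k * T t (Pi.single k 1) j := by
    intro j n t ht x
    have := aux5_clm_rep ((ContinuousLinearMap.proj j).comp (T t)) (Gf j n)
      (fun k hk => hGzero j n k hk t ht) x
    exact this
  -- definition of the generator
  set Alin : (I → ℝ) →ₗ[ℝ] (I → ℝ) :=
    { toFun := fun x l => ∑ k ∈ Gf l 1, a l k * x k
      map_add' := by
        intro x y; funext l
        simp [mul_add, Finset.sum_add_distrib]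
      map_smul' := by
        intro c x; funext l
        simp [Finset.mul_sum, mul_left_comm] } with hAlin
  have hAcont : Continuous Alin := by
    apply continuous_pi
    intro l
    exact continuous_finset_sum _ (fun k _ => continuous_const.mul (continuous_apply k))
  set A : (I → ℝ) →L[ℝ] (I → ℝ) := { toLinearMap := Alin, cont := hAcont } with hA
  have hAapp : ∀ (x : I → ℝ) (l : I), A x l = ∑ k ∈ Gf l 1, a l k * x k := fun x l => rfl
  refine ⟨A, ?_, ?_⟩
  · -- Part 1 : generator limit
    intro x
    rw [tendsto_pi_nhds]
    intro l
    have hslopek : ∀ k : I, Tendsto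
        (fun h : ℝ => h⁻¹ * (T h (Pi.single k 1) l - T 0 (Pi.single k 1) l))
        (𝓝[>] 0) (𝓝 (a l k)) := by
      intro k
      have h1 := hasDerivWithinAt_iff_tendsto_slope.mp (ha l k)
      have h2 : Set.Ici (0:ℝ) \ {0} = Set.Ioi 0 := Set.Ici_sdiff_left
      rw [h2] at h1
      have h3 : (fun h : ℝ => h⁻¹ * (T h (Pi.single k 1) l - T 0 (Pi.single k 1) l))
          = slope (fun t : ℝ => T t (Pi.single k 1) l) 0 := by
        funext h
        rw [slope_def_field, sub_zero, div_eq_inv_mul]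
      rw [h3]
      exact h1
    have htsum : Tendsto
        (fun h : ℝ => ∑ k ∈ Gf l 1, (h⁻¹ * (T h (Pi.single k 1) l - T 0 (Pi.single k 1) l)) * x k)
        (𝓝[>] 0) (𝓝 (∑ k ∈ Gf l 1, a l k * x k)) :=
      tendsto_finset_sum _ (fun k _ => (hslopek k).mul_const (x k))
    have hmem : Set.Ioc (0:ℝ) 1 ∈ 𝓝[>] (0:ℝ) :=
      Ioc_mem_nhdsGT_of_mem ⟨le_rfl, zero_lt_one⟩
    have hT0x : T 0 x = x := by rw [hT0]; rfl
    have heq : ∀ᶠ h in 𝓝[>] (0:ℝ),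
        (∑ k ∈ Gf l 1, (h⁻¹ * (T h (Pi.single k 1) l - T 0 (Pi.single k 1) l)) * x k)
        = (h⁻¹ • (T h x - x)) l := by
      filter_upwards [hmem] with h hh
      have hx0 : x l = ∑ k ∈ Gf l 1, x k * T 0 (Pi.single k 1) l := by
        have h0 := hrep l 1 0 ⟨le_rfl, zero_le_one⟩ x
        rw [hT0x] at h0
        exact h0
      have hx1 : T h x l = ∑ k ∈ Gf l 1, x k * T h (Pi.single k 1) l :=
        hrep l 1 h ⟨le_of_lt hh.1, hh.2⟩ x
      have : (h⁻¹ • (T h x - x)) l = h⁻¹ * (T h x l - x l) := rfl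
      rw [this, hx1, hx0, ← Finset.sum_sub_distrib, Finset.mul_sum]
      refine Finset.sum_congr rfl fun k _ => ?_
      ring
    have hlim : A x l = ∑ k ∈ Gf l 1, a l k * x k := hAapp x l
    rw [hlim]
    exact htsum.congr' heq
  · -- Part 2 : exponential series
    intro x t ht
    rw [tendsto_pi_nhds]
    intro j
    set n : ℝ := t + 1 with hn
    have hn0 : (0:ℝ) < n := by rw [hn]; linarith
    have htn : t ∈ Set.Icc (0:ℝ) n := ⟨ht, by rw [hn]; linarith⟩
    set G : Finset I := Gf j n with hGdef2
    have hjG2 : j ∈ G := hjG j n (le_of_lt hn0)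
    -- the operator B
    set Blin : (↥G → ℝ) →ₗ[ℝ] (↥G → ℝ) :=
      { toFun := fun y q => ∑ p : ↥G, y p * a ↑p ↑q
        map_add' := by
          intro y z; funext q
          simp [add_mul, Finset.sum_add_distrib]
        map_smul' := by
          intro c y; funext q
          simp [Finset.mul_sum, mul_assoc] } with hBlin
    set B : (↥G → ℝ) →L[ℝ] (↥G → ℝ) := LinearMap.toContinuousLinearMap Blin with hB
    have hBapp : ∀ (y : ↥G → ℝ) (q : ↥G), B y q = ∑ p : ↥G, y p * a ↑p ↑q := by
      intro y q
      rw [hB, LinearMap.coe_toContinuousLinearMap']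
      rfl
    -- the curve
    set u : ℝ → (↥G → ℝ) := fun s q => T s (Pi.single (↑q) 1) j with hu
    have hucont : ContinuousOn u (Set.Icc 0 n) := by
      apply continuousOn_pi.mpr
      intro q
      exact ((continuous_apply j).comp_continuousOn (horbit _)).mono Set.Icc_subset_Ici_self
    have hu0 : u 0 = Pi.single (⟨j, hjG2⟩ : ↥G) 1 := by
      funext q
      have hid : u 0 q = (Pi.single (↑q : I) 1 : I → ℝ) j := by
        show T 0 (Pi.single (↑q : I) 1) j = _
        rw [hT0]; rfl
      rw [hid, Pi.single_apply, Pi.single_apply]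
      by_cases hq : q = (⟨j, hjG2⟩ : ↥G)
      · subst hq; simp
      · have h2 : ¬ (j = (↑q : I)) := fun hc => hq (Subtype.ext hc.symm)
        simp [h2, hq]
    -- derivative of shifted entries
    have hkey : ∀ s ∈ Set.Icc (0:ℝ) n, ∀ (k : I), HasDerivWithinAt
        (fun h : ℝ => T (s + h) (Pi.single k 1) j)
        (∑ p : ↥G, u s p * a ↑p k) (Set.Ici 0) 0 := by
      intro s hs k
      have hbase : HasDerivWithinAt
          (fun h : ℝ => ∑ p : ↥G, u s p * (T h (Pi.single k 1) ↑p))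
          (∑ p : ↥G, u s p * a ↑p k) (Set.Ici 0) 0 :=
        HasDerivWithinAt.fun_sum (fun p _ => ((ha ↑p k).const_mul (u s p)))
      have hident : ∀ h ≥ (0:ℝ), T (s + h) (Pi.single k 1) j
          = ∑ p : ↥G, u s p * T h (Pi.single k 1) ↑p := by
        intro h hh
        rw [hTadd s h hs.1 hh]
        show T s (T h (Pi.single k 1)) j = _
        rw [hrep j n s hs (T h (Pi.single k 1)),
          ← Finset.sum_coe_sort G (fun k'' => T h (Pi.single k 1) k'' * T s (Pi.single k'' 1) j)]
        exact Finset.sum_congr rfl fun p _ => mul_comm _ _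
      refine hbase.congr_of_eventuallyEq ?_ ?_
      · filter_upwards [self_mem_nhdsWithin] with h hh
        exact hident h hh
      · simpa using hident 0 le_rfl
    -- vector derivative of u
    have huder : ∀ s ∈ Set.Ico 0 n, HasDerivWithinAt u (B (u s)) (Set.Ici s) s := by
      intro s hs
      rw [hasDerivWithinAt_pi]
      intro q
      have h1 := hkey s ⟨hs.1, le_of_lt hs.2⟩ ↑q
      have hshift : HasDerivWithinAt (fun s' : ℝ => s' - s) 1 (Set.Ici s) s := by
        simpa using ((hasDerivWithinAt_id s (Set.Ici s)).sub_const s)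
      have hmaps : Set.MapsTo (fun s' : ℝ => s' - s) (Set.Ici s) (Set.Ici 0) := by
        intro y hy
        simpa [Set.mem_Ici] using sub_nonneg.mpr (Set.mem_Ici.mp hy)
      have h2 := HasDerivWithinAt.comp_of_eq s h1 hshift hmaps (sub_self s).symm
      have h3 : ((fun h : ℝ => T (s + h) (Pi.single (↑q : I) 1) j) ∘ (fun s' => s' - s))
          = fun s' => T s' (Pi.single (↑q : I) 1) j := by
        funext s'
        simp [Function.comp]
      rw [h3] at h2
      rw [hBapp]
      simpa using h2
    -- exponential formula
    have hode := aux5_ode_unique B u n hucont huder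
    -- vanishing outside G
    have hvanish : ∀ k : I, k ∉ G → ∀ N : ℕ, ∑ p : ↥G, ((B ^ N) (u 0)) p * a ↑p k = 0 := by
      intro k hk N
      set wlin : (↥G → ℝ) →ₗ[ℝ] ℝ :=
        { toFun := fun y => ∑ p : ↥G, y p * a ↑p k
          map_add' := by
            intro y z
            simp [add_mul, Finset.sum_add_distrib]
          map_smul' := by
            intro c y
            simp [Finset.mul_sum, mul_assoc] } with hwlin
      set wc : (↥G → ℝ) →L[ℝ] ℝ := LinearMap.toContinuousLinearMap wlin with hwc
      have hwapp : ∀ y : ↥G → ℝ, wc y = ∑ p : ↥G, y p * a ↑p k := by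
        intro y
        rw [hwc, LinearMap.coe_toContinuousLinearMap']
        rfl
      have h0 : ∀ s ∈ Set.Ico (0:ℝ) n, wc (u s) = 0 := by
        intro s hs
        have hz : HasDerivWithinAt (fun h : ℝ => T (s + h) (Pi.single k 1) j) 0
            (Set.Ici 0) 0 := by
          refine (hasDerivWithinAt_const (0:ℝ) _ (0:ℝ)).congr_of_eventuallyEq ?_ ?_
          · have hmem2 : Set.Ico (0:ℝ) (n - s) ∈ 𝓝[Set.Ici 0] (0:ℝ) := by
              rw [show Set.Ico (0:ℝ) (n-s) = Set.Ici 0 ∩ Set.Iio (n-s) by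
                rw [Set.Ici_inter_Iio]]
              exact inter_mem_nhdsWithin _ (Iio_mem_nhds (by linarith [hs.2]))
            filter_upwards [hmem2] with h hh
            exact hGzero j n k hk (s+h) ⟨by linarith [hs.1, hh.1], by linarith [hh.2]⟩
          · have := hGzero j n k hk s ⟨hs.1, le_of_lt hs.2⟩
            simpa using this
        have huniq := (uniqueDiffOn_Ici (0:ℝ) 0 Set.self_mem_Ici).eq_deriv _
          (hkey s ⟨hs.1, le_of_lt hs.2⟩ k) hz
        rw [hwapp]
        exact huniq
      have := aux5_iterated_vanish B u wc n huder h0 N 0 ⟨le_rfl, hn0⟩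
      rw [hwapp] at this
      exact this
    -- power identity
    have hpow : ∀ (N : ℕ) (x' : I → ℝ),
        (A ^ N) x' j = ∑ p : ↥G, ((B ^ N) (u 0)) p * x' ↑p := by
      intro N
      induction N with
      | zero =>
        intro x'
        rw [pow_zero, pow_zero, ContinuousLinearMap.one_apply, ContinuousLinearMap.one_apply, hu0]
        rw [Finset.sum_eq_single (⟨j, hjG2⟩ : ↥G)]
        · simp
        · intro b _ hb
          rw [Pi.single_apply]
          simp [hb]
        · intro habs
          exact absurd (Finset.mem_univ _) habs
      | succ N ih =>
        intro x'
        have hstep : (A ^ (N+1)) x' = (A ^ N) (A x') := by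
          rw [pow_succ, ContinuousLinearMap.mul_apply]
        rw [hstep, ih (A x')]
        set K : Finset I := G ∪ Finset.univ.biUnion (fun p : ↥G => Gf (↑p) 1) with hK
        have hsubK : ∀ p : ↥G, Gf (↑p) 1 ⊆ K := by
          intro p k hkmem
          exact Finset.mem_union_right _ (Finset.mem_biUnion.mpr ⟨p, Finset.mem_univ _, hkmem⟩)
        have hGK : G ⊆ K := Finset.subset_union_left
        have hAx' : ∀ p : ↥G, A x' ↑p = ∑ k ∈ K, a ↑p k * x' k := by
          intro p
          rw [hAapp]
          exact Finset.sum_subset (hsubK p) (fun k _ hk => by rw [ha0 ↑p k hk, zero_mul])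
        calc ∑ p : ↥G, ((B ^ N) (u 0)) p * A x' ↑p
            = ∑ p : ↥G, ∑ k ∈ K, ((B ^ N) (u 0)) p * (a ↑p k * x' k) := by
              refine Finset.sum_congr rfl fun p _ => ?_
              rw [hAx' p, Finset.mul_sum]
          _ = ∑ k ∈ K, (∑ p : ↥G, ((B ^ N) (u 0)) p * a ↑p k) * x' k := by
              rw [Finset.sum_comm]
              refine Finset.sum_congr rfl fun k _ => ?_
              rw [Finset.sum_mul]
              refine Finset.sum_congr rfl fun p _ => ?_
              ring
          _ = ∑ k ∈ G, (∑ p : ↥G, ((B ^ N) (u 0)) p * a ↑p k) * x' k := by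
              refine (Finset.sum_subset hGK fun k _ hk => ?_).symm
              rw [hvanish k hk N, zero_mul]
          _ = ∑ q : ↥G, ((B ^ (N+1)) (u 0)) q * x' ↑q := by
              rw [← Finset.sum_coe_sort G
                (fun k => (∑ p : ↥G, ((B ^ N) (u 0)) p * a ↑p k) * x' k)]
              refine Finset.sum_congr rfl fun q _ => ?_
              congr 1
              rw [pow_succ', ContinuousLinearMap.mul_apply, hBapp]
    -- series convergence in the operator algebra
    have hhasSum : HasSum (fun N : ℕ => ((N.factorial : ℝ))⁻¹ • (t • B) ^ N)
        (NormedSpace.exp (t • B)) := by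
      rw [NormedSpace.exp_eq_tsum ℝ]
      exact (NormedSpace.expSeries_summable' (𝕂 := ℝ) (t • B)).hasSum
    have hterm : ∀ N : ℕ, ((N.factorial : ℝ))⁻¹ • (t • B) ^ N
        = (t ^ N / (N.factorial : ℝ)) • B ^ N := by
      intro N
      rw [smul_pow, smul_smul, div_eq_mul_inv, mul_comm]
    have htendOp : Tendsto (fun N : ℕ => ∑ k ∈ Finset.range N,
        (t ^ k / (k.factorial : ℝ)) • B ^ k) atTop (𝓝 (NormedSpace.exp (t • B))) := by
      have h5 := hhasSum.tendsto_sum_nat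
      exact h5.congr fun N => Finset.sum_congr rfl fun k _ => hterm k
    -- evaluation is continuous
    have hevalcont : Continuous (fun L : (↥G → ℝ) →L[ℝ] (↥G → ℝ) =>
        ∑ p : ↥G, (L (u 0)) p * x ↑p) := by
      apply continuous_finset_sum
      intro p _
      exact ((continuous_apply p).comp
        ((ContinuousLinearMap.apply ℝ (↥G → ℝ) (u 0)).continuous)).mul continuous_const
    have htendEval : Tendsto (fun N : ℕ =>
        ∑ p : ↥G, ((∑ k ∈ Finset.range N, (t ^ k / (k.factorial : ℝ)) • B ^ k) (u 0)) p * x ↑p)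
        atTop (𝓝 (∑ p : ↥G, (NormedSpace.exp (t • B) (u 0)) p * x ↑p)) :=
      (hevalcont.continuousAt).tendsto.comp htendOp
    -- identify both sides
    have hlhs : ∀ N : ℕ, (∑ k ∈ Finset.range N, (t ^ k / (k.factorial : ℝ)) • (A ^ k) x) j
        = ∑ p : ↥G, ((∑ k ∈ Finset.range N, (t ^ k / (k.factorial : ℝ)) • B ^ k) (u 0)) p * x ↑p := by
      intro N
      have hL : ∀ p : ↥G, ((∑ k ∈ Finset.range N, (t ^ k / (k.factorial : ℝ)) • B ^ k) (u 0)) p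
          = ∑ k ∈ Finset.range N, (t ^ k / (k.factorial : ℝ)) * ((B ^ k) (u 0) p) := by
        intro p
        rw [ContinuousLinearMap.sum_apply, Finset.sum_apply]
        refine Finset.sum_congr rfl fun k _ => ?_
        rw [ContinuousLinearMap.smul_apply]
        rfl
      calc (∑ k ∈ Finset.range N, (t ^ k / (k.factorial : ℝ)) • (A ^ k) x) j
          = ∑ k ∈ Finset.range N, (t ^ k / (k.factorial : ℝ)) * ((A ^ k) x j) := by
            rw [Finset.sum_apply]
            refine Finset.sum_congr rfl fun k _ => ?_
            rfl
        _ = ∑ k ∈ Finset.range N, ∑ p : ↥G,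
              (t ^ k / (k.factorial : ℝ)) * (((B ^ k) (u 0)) p * x ↑p) := by
            refine Finset.sum_congr rfl fun k _ => ?_
            rw [hpow k x, Finset.mul_sum]
        _ = ∑ p : ↥G, (∑ k ∈ Finset.range N,
              (t ^ k / (k.factorial : ℝ)) * ((B ^ k) (u 0) p)) * x ↑p := by
            rw [Finset.sum_comm]
            refine Finset.sum_congr rfl fun p _ => ?_
            rw [Finset.sum_mul]
            refine Finset.sum_congr rfl fun k _ => ?_
            ring
        _ = ∑ p : ↥G, ((∑ k ∈ Finset.range N, (t ^ k / (k.factorial : ℝ)) • B ^ k) (u 0)) p * x ↑p := by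
            refine Finset.sum_congr rfl fun p _ => ?_
            rw [hL p]
    have hrhsval : ∑ p : ↥G, (NormedSpace.exp (t • B) (u 0)) p * x ↑p = T t x j := by
      have h1 := hode t htn
      rw [← h1]
      have h3 := hrep j n t htn x
      rw [h3, ← Finset.sum_coe_sort G (fun k => x k * T t (Pi.single k 1) j)]
      exact Finset.sum_congr rfl fun p _ => mul_comm _ _
    rw [show (𝓝 (T t x j)) = 𝓝 (∑ p : ↥G, (NormedSpace.exp (t • B) (u 0)) p * x ↑p) by
      rw [hrhsval]]
    exact Tendsto.congr (fun N => (hlhs N).symm) htendEval
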